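/- Let U ∈ ℝ^{d×k} have orthonormal columns, ŵ ∈ ℝ^d, ε > 0, and x ∈ ℝ^d with label y ∈ {±1}. If there exists δ ∈ ℝ^d such that ‖UU^T δ‖∞ ≤ ε and ⟨y(x + UU^T δ), ŵ⟩ ≤ 0, then ⟨y·x, ŵ⟩ ≤ k·‖U‖_{∞,1}·‖U^T ŵ‖∞·ε. -/
import Mathlib


open Matrix

/-- The `(∞,1)` operator norm `‖U‖_{∞,1} = sup { ‖Uᵀ v‖₁ : ‖v‖∞ ≤ 1 }`. -/
noncomputable def opNormInfOne {d k : ℕ} (U : Matrix (Fin d) (Fin k) ℝ) : ℝ :=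
  sSup {r : ℝ | ∃ v : Fin d → ℝ, ‖v‖ ≤ 1 ∧ r = ∑ j, |Uᵀ.mulVec v j|}

lemma opNormInfOne_bdd {d k : ℕ} (U : Matrix (Fin d) (Fin k) ℝ) :
    BddAbove {r : ℝ | ∃ v : Fin d → ℝ, ‖v‖ ≤ 1 ∧ r = ∑ j, |Uᵀ.mulVec v j|} := by
  refine ⟨∑ j, ∑ i, |U i j|, ?_⟩
  rintro r ⟨v, hv, rfl⟩
  apply Finset.sum_le_sum
  intro j _
  calc |Uᵀ.mulVec v j| ≤ ∑ i, |Uᵀ j i * v i| := by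
        simpa [Matrix.mulVec, dotProduct] using
          Finset.abs_sum_le_sum_abs (fun i => Uᵀ j i * v i) Finset.univ
    _ ≤ ∑ i, |U i j| := by
        apply Finset.sum_le_sum
        intro i _
        rw [abs_mul, Matrix.transpose_apply]
        have h1 : |v i| ≤ 1 := by
          have := norm_le_pi_norm v i
          simpa using this.trans hv
        calc |U i j| * |v i| ≤ |U i j| * 1 :=
              mul_le_mul_of_nonneg_left h1 (abs_nonneg _)
          _ = |U i j| := mul_one _

lemma opNormInfOne_nonneg {d k : ℕ} (U : Matrix (Fin d) (Fin k) ℝ) :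
    0 ≤ opNormInfOne U := by
  have : (0 : ℝ) ∈ {r : ℝ | ∃ v : Fin d → ℝ, ‖v‖ ≤ 1 ∧ r = ∑ j, |Uᵀ.mulVec v j|} :=
    ⟨0, by simp, by simp [Matrix.mulVec_zero]⟩
  exact le_csSup (opNormInfOne_bdd U) this

lemma sum_abs_mulVec_le {d k : ℕ} (U : Matrix (Fin d) (Fin k) ℝ) (p : Fin d → ℝ)
    {ε : ℝ} (hε : 0 < ε) (hp : ‖p‖ ≤ ε) :
    ∑ j, |Uᵀ.mulVec p j| ≤ opNormInfOne U * ε := by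
  have hmem : (∑ j, |Uᵀ.mulVec (ε⁻¹ • p) j|) ∈
      {r : ℝ | ∃ v : Fin d → ℝ, ‖v‖ ≤ 1 ∧ r = ∑ j, |Uᵀ.mulVec v j|} := by
    refine ⟨ε⁻¹ • p, ?_, rfl⟩
    rw [norm_smul]
    have : ‖(ε⁻¹ : ℝ)‖ = ε⁻¹ := by
      rw [Real.norm_eq_abs, abs_of_pos (inv_pos.mpr hε)]
    rw [this]
    calc ε⁻¹ * ‖p‖ ≤ ε⁻¹ * ε := mul_le_mul_of_nonneg_left hp (le_of_lt (inv_pos.mpr hε))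
      _ = 1 := inv_mul_cancel₀ hε.ne'
  have hle := le_csSup (opNormInfOne_bdd U) hmem
  have heq : ∑ j, |Uᵀ.mulVec (ε⁻¹ • p) j| = ε⁻¹ * ∑ j, |Uᵀ.mulVec p j| := by
    rw [Finset.mul_sum]
    apply Finset.sum_congr rfl
    intro j _
    rw [Matrix.mulVec_smul]
    simp [abs_mul, abs_of_pos (inv_pos.mpr hε)]
  rw [heq] at hle
  have := mul_le_mul_of_nonneg_right hle hε.le
  rw [mul_comm ε⁻¹ _, mul_assoc, inv_mul_cancel₀ hε.ne', mul_one] at this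
  exact this

/-- Deterministic core of the subspace-attack bound: a successful ℓ∞-bounded
perturbation in the column space of `U` forces a small original margin. -/
theorem margin_le_of_subspace_adv {d k : ℕ}
    (U : Matrix (Fin d) (Fin k) ℝ) (hU : Uᵀ * U = 1)
    (w : Fin d → ℝ) (ε : ℝ) (hε : 0 < ε)
    (x : Fin d → ℝ) (y : ℝ) (hy : y = 1 ∨ y = -1)
    (δ : Fin d → ℝ) (hδ : ‖U.mulVec (Uᵀ.mulVec δ)‖ ≤ ε)
    (hadv : ∑ i, y * (x i + U.mulVec (Uᵀ.mulVec δ) i) * w i ≤ 0) :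
    ∑ i, y * x i * w i ≤ (k : ℝ) * opNormInfOne U * ‖Uᵀ.mulVec w‖ * ε := by
  set p : Fin d → ℝ := U.mulVec (Uᵀ.mulVec δ) with hp
  set z : Fin k → ℝ := Uᵀ.mulVec δ with hz
  set q : Fin k → ℝ := Uᵀ.mulVec w with hq
  -- Uᵀ p = z
  have hUp : Uᵀ.mulVec p = z := by
    rw [hp, Matrix.mulVec_mulVec, hU, Matrix.one_mulVec]
  -- step 1: margin ≤ -y * ⟨p, w⟩
  have h1 : ∑ i, y * x i * w i ≤ -(y * ∑ i, p i * w i) := by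
    have : ∑ i, y * (x i + p i) * w i
        = ∑ i, y * x i * w i + y * ∑ i, p i * w i := by
      rw [Finset.mul_sum, ← Finset.sum_add_distrib]
      apply Finset.sum_congr rfl
      intro i _; ring
    linarith [hadv, this ▸ hadv]
  -- step 2: ⟨p, w⟩ = ⟨z, q⟩
  have h2 : ∑ i, p i * w i = ∑ j, z j * q j := by
    simp only [hp, hq, ← hz]
    rw [show ∑ i, U.mulVec z i * w i = U.mulVec z ⬝ᵥ w from rfl,
        show ∑ j, z j * Uᵀ.mulVec w j = z ⬝ᵥ Uᵀ.mulVec w from rfl]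
    rw [Matrix.dotProduct_mulVec, Matrix.vecMul_transpose]
  -- step 3: |⟨z, q⟩| ≤ (∑ |z j|) * ‖q‖
  have h3 : |∑ j, z j * q j| ≤ (∑ j, |z j|) * ‖q‖ := by
    calc |∑ j, z j * q j| ≤ ∑ j, |z j * q j| :=
          Finset.abs_sum_le_sum_abs _ _
      _ ≤ ∑ j, |z j| * ‖q‖ := by
          apply Finset.sum_le_sum
          intro j _
          rw [abs_mul]
          exact mul_le_mul_of_nonneg_left (by simpa using norm_le_pi_norm q j) (abs_nonneg _)
      _ = (∑ j, |z j|) * ‖q‖ := by rw [← Finset.sum_mul]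
  -- step 4: ∑ |z j| ≤ opNormInfOne U * ε
  have h4 : ∑ j, |z j| ≤ opNormInfOne U * ε := by
    rw [← hUp]
    exact sum_abs_mulVec_le U p hε hδ
  have hy1 : |y| = 1 := by rcases hy with rfl | rfl <;> norm_num
  have hq0 : (0:ℝ) ≤ ‖q‖ := norm_nonneg _
  have hmain : ∑ i, y * x i * w i ≤ opNormInfOne U * ε * ‖q‖ := by
    calc ∑ i, y * x i * w i ≤ -(y * ∑ i, p i * w i) := h1
      _ ≤ |y * ∑ i, p i * w i| := neg_le_abs _
      _ = |∑ j, z j * q j| := by rw [abs_mul, hy1, one_mul, h2]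
      _ ≤ (∑ j, |z j|) * ‖q‖ := h3
      _ ≤ opNormInfOne U * ε * ‖q‖ := mul_le_mul_of_nonneg_right h4 hq0
  rcases Nat.eq_zero_or_pos k with hk | hk
  · subst hk
    have hz0 : ∑ j : Fin 0, |z j| = 0 := by simp
    have : ∑ i, y * x i * w i ≤ 0 := by
      calc ∑ i, y * x i * w i ≤ -(y * ∑ i, p i * w i) := h1
        _ ≤ |y * ∑ i, p i * w i| := neg_le_abs _
        _ = |∑ j, z j * q j| := by rw [abs_mul, hy1, one_mul, h2]
        _ ≤ (∑ j, |z j|) * ‖q‖ := h3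
        _ = 0 := by rw [hz0, zero_mul]
    simpa using this
  · have hk1 : (1:ℝ) ≤ (k:ℝ) := by exact_mod_cast hk
    calc ∑ i, y * x i * w i ≤ opNormInfOne U * ε * ‖q‖ := hmain
      _ = 1 * opNormInfOne U * ‖q‖ * ε := by ring
      _ ≤ (k : ℝ) * opNormInfOne U * ‖q‖ * ε := by
          have := opNormInfOne_nonneg U
          apply mul_le_mul_of_nonneg_right _ hε.le
          apply mul_le_mul_of_nonneg_right _ hq0
          exact mul_le_mul_of_nonneg_right hk1 this
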